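/- Let A be a commutative Noetherian ring, 𝔞 an ideal, and M a finitely generated A-module such that 𝔞M ≠ 0 but 𝔞ⁿM = 0 for some n. Then there exists a maximal ideal 𝔪 ⊇ 𝔞 and an integer n such that the image of 𝔞M in M/𝔪ⁿM is nonzero; in particular, the Artinian quotient S = A/𝔪ⁿ has the property that 𝔞(M ⊗_A S) ≠ 0. -/
import Mathlib


/-- Let `A` be a commutative Noetherian ring, `I` an ideal, and `M` a finitely
generated `A`-module such that `I • M ≠ 0` but `I ^ n • M = 0` for some `n`.  Then there exists
a maximal ideal `𝔪 ⊇ I` and an integer `n` such that the image of `I • M` in `M / 𝔪 ^ n • M` is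
nonzero; in particular the Artinian quotient `A / 𝔪 ^ n` has the property that
`I • (M ⊗ A/𝔪ⁿ) ≠ 0`, which we express by saying that `I` acts nontrivially on the quotient
module `M ⧸ 𝔪 ^ n • M`. -/
theorem statement0 {A : Type*} [CommRing A] [IsNoetherianRing A]
    (I : Ideal A) (M : Type*) [AddCommGroup M] [Module A M] [Module.Finite A M]
    (h1 : I • (⊤ : Submodule A M) ≠ ⊥)
    (h2 : ∃ n : ℕ, I ^ n • (⊤ : Submodule A M) = ⊥) :
    ∃ 𝔪 : Ideal A, 𝔪.IsMaximal ∧ I ≤ 𝔪 ∧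
      ∃ n : ℕ, ¬ (I • (⊤ : Submodule A M) ≤ 𝔪 ^ n • (⊤ : Submodule A M)) ∧
        I • (⊤ : Submodule A (M ⧸ (𝔪 ^ n • (⊤ : Submodule A M)))) ≠ ⊥ := by
  obtain ⟨k, hk⟩ := h2
  -- pick a nonzero element x of I • ⊤
  obtain ⟨x, hxI, hx0⟩ : ∃ x ∈ I • (⊤ : Submodule A M), x ≠ 0 := by
    by_contra h
    push_neg at h
    exact h1 (eq_bot_iff.mpr fun x hx => h x hx)
  -- annihilator of x
  set J : Ideal A := Submodule.span A {x} |>.annihilator with hJ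
  have hJx : ∀ a ∈ J, a • x = 0 := by
    intro a ha
    exact Submodule.mem_annihilator.mp ha x (Submodule.mem_span_singleton_self x)
  have hJne : J ≠ ⊤ := by
    intro h
    have := hJx 1 (h ▸ trivial)
    simp at this
    exact hx0 this
  obtain ⟨𝔪, h𝔪, hJ𝔪⟩ := Ideal.exists_le_maximal J hJne
  have hI𝔪 : I ≤ 𝔪 := by
    have hIk : I ^ k ≤ J := by
      intro a ha
      rw [Submodule.mem_annihilator]
      intro y hy
      rw [Submodule.mem_span_singleton] at hy
      obtain ⟨c, rfl⟩ := hy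
      have : a • x = 0 := by
        have : a • x ∈ I ^ k • (⊤ : Submodule A M) :=
          Submodule.smul_mem_smul ha trivial
        rwa [hk, Submodule.mem_bot] at this
      rw [smul_comm, this, smul_zero]
    exact Ideal.IsPrime.le_of_pow_le (hP := h𝔪.isPrime) (hIk.trans hJ𝔪)
  -- x is not in the intersection of 𝔪 ^ n • ⊤
  -- transport to a module in the same universe as A to apply Krull intersection
  obtain ⟨m, f, hf⟩ := Module.Finite.exists_fin' A M
  let M' := (Fin m → A) ⧸ LinearMap.ker f
  letI : Module.Finite A M' := Module.Finite.quotient A _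
  let e : M' ≃ₗ[A] M := f.quotKerEquivOfSurjective hf
  have hnotinf : x ∉ (⨅ i : ℕ, 𝔪 ^ i • ⊤ : Submodule A M) := by
    intro hmem
    have hmem' : e.symm x ∈ (⨅ i : ℕ, 𝔪 ^ i • ⊤ : Submodule A M') := by
      rw [Submodule.mem_iInf] at hmem ⊢
      intro i
      have hmap : Submodule.map (e : M' →ₗ[A] M) (𝔪 ^ i • ⊤) =
          (𝔪 ^ i • ⊤ : Submodule A M) := by
        rw [Submodule.map_smul'', Submodule.map_top, LinearEquiv.range]
      have hmi := hmem i
      rw [← hmap] at hmi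
      obtain ⟨y, hy, hyx⟩ := hmi
      have : e.symm x = y := by
        apply e.injective
        simpa using hyx.symm
      rwa [this]
    obtain ⟨r, hr'⟩ := (Ideal.mem_iInf_smul_pow_eq_bot_iff 𝔪 (e.symm x)).mp hmem'
    have hr : (r : A) • x = x := by
      have := congrArg e hr'
      rwa [map_smul, LinearEquiv.apply_symm_apply] at this
    have h1r : (1 : A) - r ∈ J := by
      rw [hJ, Submodule.mem_annihilator]
      intro y hy
      rw [Submodule.mem_span_singleton] at hy
      obtain ⟨c, rfl⟩ := hy
      rw [smul_comm, sub_smul, one_smul, hr, sub_self, smul_zero]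
    have : (1 : A) ∈ 𝔪 := by
      have := 𝔪.add_mem (hJ𝔪 h1r) r.2
      simpa using this
    exact h𝔪.ne_top (Ideal.eq_top_of_isUnit_mem _ this isUnit_one)
  rw [Submodule.mem_iInf] at hnotinf
  push_neg at hnotinf
  obtain ⟨n, hn⟩ := hnotinf
  refine ⟨𝔪, h𝔪, hI𝔪, n, fun hle => hn (hle hxI), ?_⟩
  -- the quotient part
  intro hbot
  apply hn
  have : Submodule.Quotient.mk (p := 𝔪 ^ n • (⊤ : Submodule A M)) x ∈
      I • (⊤ : Submodule A (M ⧸ (𝔪 ^ n • (⊤ : Submodule A M)))) := by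
    have := Submodule.map_smul'' I (⊤ : Submodule A M)
      (𝔪 ^ n • (⊤ : Submodule A M)).mkQ
    rw [Submodule.map_top, Submodule.range_mkQ] at this
    rw [← this]
    exact Submodule.mem_map_of_mem hxI
  rw [hbot, Submodule.mem_bot, Submodule.Quotient.mk_eq_zero] at this
  exact this
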